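/- Let v : ℝⁿ₊ → ℝᵐ be continuous on the closed upper half-space, let a > 0 and ν ∈ ℝ, and define h(x) = sup{ t ≥ 0 : sup over the shifted cone Γ_a(x,t) of |v| > ν }, where Γ_a(x,t) = (0,t) + Γ_a(x,0) and Γ_a(x,0) = { X ∈ ℝⁿ₊ : |X − (x,0)| ≤ (1+a)·dist(X, ∂ℝⁿ₊) }. If h(x) < ∞ for all x ∈ ℝⁿ⁻¹, then h is Lipschitz continuous with Lipschitz constant at most 1/a. -/

import Mathlib

open Metric Set

private lemma tri_aux (u1 u2 w1 w2 : ℝ) :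
    Real.sqrt ((u1 + u2) ^ 2 + (w1 + w2) ^ 2)
      ≤ Real.sqrt (u1 ^ 2 + w1 ^ 2) + Real.sqrt (u2 ^ 2 + w2 ^ 2) := by
  set s1 := Real.sqrt (u1 ^ 2 + w1 ^ 2) with hs1
  set s2 := Real.sqrt (u2 ^ 2 + w2 ^ 2) with hs2
  have h1 : s1 ^ 2 = u1 ^ 2 + w1 ^ 2 := Real.sq_sqrt (by positivity)
  have h2 : s2 ^ 2 = u2 ^ 2 + w2 ^ 2 := Real.sq_sqrt (by positivity)
  have hn1 : 0 ≤ s1 := Real.sqrt_nonneg _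
  have hn2 : 0 ≤ s2 := Real.sqrt_nonneg _
  have hcs : u1 * u2 + w1 * w2 ≤ s1 * s2 := by
    nlinarith [sq_nonneg (u1 * w2 - u2 * w1), sq_nonneg (s1 * s2 - u1 * u2 - w1 * w2),
      sq_nonneg (s1 * s2 + u1 * u2 + w1 * w2), mul_nonneg hn1 hn2]
  have : (u1 + u2) ^ 2 + (w1 + w2) ^ 2 ≤ (s1 + s2) ^ 2 := by nlinarith
  calc Real.sqrt ((u1 + u2) ^ 2 + (w1 + w2) ^ 2) ≤ Real.sqrt ((s1 + s2) ^ 2) :=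
        Real.sqrt_le_sqrt this
    _ = s1 + s2 := Real.sqrt_sq (by positivity)

/-- Lemma 4.5 (Lemma 3.13 of KKPT): the stopping-time function
`h(x) = sup{ t ≥ 0 : sup_{Γ_a(x,t)} |v| > ν }`, where `Γ_a(x,t)` is the
non-tangential cone of aperture `a` with vertex `(x,0)` shifted vertically by `t`,
is Lipschitz with constant `1/a`, provided it is finite everywhere. -/
theorem stmt_2 (d m : ℕ) (a ν : ℝ) (ha : 0 < a)
    (v : EuclideanSpace ℝ (Fin d) × ℝ → EuclideanSpace ℝ (Fin m))
    (hv : ContinuousOn v {p : EuclideanSpace ℝ (Fin d) × ℝ | 0 ≤ p.2})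
    (h : EuclideanSpace ℝ (Fin d) → ℝ)
    (hdef : ∀ x, h x = sSup {t : ℝ | 0 ≤ t ∧
      ∃ p : EuclideanSpace ℝ (Fin d) × ℝ, t < p.2 ∧
        Real.sqrt (‖p.1 - x‖ ^ 2 + (p.2 - t) ^ 2) ≤ (1 + a) * (p.2 - t) ∧
        ν < ‖v p‖})
    (hfin : ∀ x, BddAbove {t : ℝ | 0 ≤ t ∧
      ∃ p : EuclideanSpace ℝ (Fin d) × ℝ, t < p.2 ∧
        Real.sqrt (‖p.1 - x‖ ^ 2 + (p.2 - t) ^ 2) ≤ (1 + a) * (p.2 - t) ∧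
        ν < ‖v p‖}) :
    ∀ x y, |h x - h y| ≤ (1 / a) * ‖x - y‖ := by
  set S : EuclideanSpace ℝ (Fin d) → Set ℝ := fun x => {t : ℝ | 0 ≤ t ∧
      ∃ p : EuclideanSpace ℝ (Fin d) × ℝ, t < p.2 ∧
        Real.sqrt (‖p.1 - x‖ ^ 2 + (p.2 - t) ^ 2) ≤ (1 + a) * (p.2 - t) ∧
        ν < ‖v p‖} with hS
  have hnn : ∀ x, 0 ≤ h x := by
    intro x
    rw [hdef x]
    by_cases hne : (S x).Nonempty
    · obtain ⟨t, ht⟩ := hne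
      exact le_trans ht.1 (le_csSup (hfin x) ht)
    · rw [Set.not_nonempty_iff_eq_empty] at hne
      rw [show {t : ℝ | 0 ≤ t ∧
      ∃ p : EuclideanSpace ℝ (Fin d) × ℝ, t < p.2 ∧
        Real.sqrt (‖p.1 - x‖ ^ 2 + (p.2 - t) ^ 2) ≤ (1 + a) * (p.2 - t) ∧
        ν < ‖v p‖} = S x from rfl, hne, Real.sSup_empty]
  have key : ∀ x y, h x ≤ h y + (1 / a) * ‖x - y‖ := by
    intro x y
    set c : ℝ := (1 / a) * ‖x - y‖ with hc
    have hc0 : 0 ≤ c := by positivity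
    have hac : a * c = ‖x - y‖ := by
      rw [hc, ← mul_assoc, mul_one_div_cancel ha.ne', one_mul]
    rw [hdef x]
    by_cases hne : (S x).Nonempty
    · apply csSup_le hne
      intro t ht
      obtain ⟨ht0, p, hp1, hp2, hp3⟩ := ht
      by_cases hts : t ≤ c
      · linarith [hnn y]
      · push_neg at hts
        have hmem : t - c ∈ S y := by
          refine ⟨by linarith, p, by linarith, ?_, hp3⟩
          have hB : ‖p.1 - y‖ ≤ ‖p.1 - x‖ + ‖x - y‖ := by
            calc ‖p.1 - y‖ = ‖(p.1 - x) + (x - y)‖ := by rw [sub_add_sub_cancel]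
              _ ≤ ‖p.1 - x‖ + ‖x - y‖ := norm_add_le _ _
          have hr : 0 < p.2 - t := by linarith
          have step1 : Real.sqrt (‖p.1 - y‖ ^ 2 + (p.2 - (t - c)) ^ 2)
              ≤ Real.sqrt ((‖p.1 - x‖ + ‖x - y‖) ^ 2 + ((p.2 - t) + c) ^ 2) := by
            apply Real.sqrt_le_sqrt
            have : ‖p.1 - y‖ ^ 2 ≤ (‖p.1 - x‖ + ‖x - y‖) ^ 2 := by
              nlinarith [norm_nonneg (p.1 - y)]
            nlinarith
          have step2 : Real.sqrt ((‖p.1 - x‖ + ‖x - y‖) ^ 2 + ((p.2 - t) + c) ^ 2)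
              ≤ Real.sqrt (‖p.1 - x‖ ^ 2 + (p.2 - t) ^ 2)
                + Real.sqrt (‖x - y‖ ^ 2 + c ^ 2) := tri_aux _ _ _ _
          have step3 : Real.sqrt (‖x - y‖ ^ 2 + c ^ 2) ≤ (1 + a) * c := by
            calc Real.sqrt (‖x - y‖ ^ 2 + c ^ 2) ≤ Real.sqrt (((1 + a) * c) ^ 2) := by
                  apply Real.sqrt_le_sqrt
                  have hsq : ‖x - y‖ ^ 2 = (a * c) ^ 2 := by rw [hac]
                  nlinarith [mul_nonneg ha.le (mul_nonneg hc0 hc0)]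
              _ = (1 + a) * c := Real.sqrt_sq (by positivity)
          calc Real.sqrt (‖p.1 - y‖ ^ 2 + (p.2 - (t - c)) ^ 2)
              ≤ Real.sqrt (‖p.1 - x‖ ^ 2 + (p.2 - t) ^ 2)
                + Real.sqrt (‖x - y‖ ^ 2 + c ^ 2) := le_trans step1 step2
            _ ≤ (1 + a) * (p.2 - t) + (1 + a) * c := add_le_add hp2 step3
            _ = (1 + a) * (p.2 - (t - c)) := by ring
        have := le_csSup (hfin y) hmem
        rw [← hdef y] at this
        linarith
    · rw [Set.not_nonempty_iff_eq_empty] at hne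
      rw [show {t : ℝ | 0 ≤ t ∧
      ∃ p : EuclideanSpace ℝ (Fin d) × ℝ, t < p.2 ∧
        Real.sqrt (‖p.1 - x‖ ^ 2 + (p.2 - t) ^ 2) ≤ (1 + a) * (p.2 - t) ∧
        ν < ‖v p‖} = S x from rfl, hne, Real.sSup_empty]
      have := hnn y
      linarith
  intro x y
  have h1 := key x y
  have h2 := key y x
  rw [norm_sub_rev y x] at h2
  rw [abs_sub_le_iff]
  constructor <;> linarith
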